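/- Let G be a finite non-abelian group, K ≤ G a non-abelian subgroup, and H ≤ K an abelian subgroup. Then d(K,G) < d(H,G). -/

import Mathlib

/-- The relative commutativity degree `d(H,G)` of a subgroup `H` of a group `G`. -/
noncomputable def relCommDeg {G : Type*} [Group G] (H : Subgroup G) : ℚ :=
  (Nat.card {p : H × G // (p.1 : G) * p.2 = p.2 * (p.1 : G)} : ℚ) /
    ((Nat.card H : ℚ) * (Nat.card G : ℚ))

/-- The set `D(G)` of all relative commutativity degrees of `G`. -/
noncomputable def commDegSet (G : Type*) [Group G] : Set ℚ :=
  {q | ∃ H : Subgroup G, relCommDeg H = q}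

/-- Number of elements of `L` commuting with `g`. -/
noncomputable def centCard {G : Type*} [Group G] (L : Subgroup G) (g : G) : ℕ :=
  Nat.card {x : L // (x : G) * g = g * (x : G)}

lemma centCard_eq {G : Type*} [Group G] (L : Subgroup G) (g : G) :
    centCard L g = Nat.card ((Subgroup.centralizer {g}).subgroupOf L) :=
  Nat.card_congr <| Equiv.subtypeEquivRight fun x => by
    simp [Subgroup.mem_subgroupOf, Subgroup.mem_centralizer_iff, eq_comm]

lemma sum_centCard {G : Type*} [Group G] [Fintype G] (L : Subgroup G) :
    Nat.card {p : L × G // (p.1 : G) * p.2 = p.2 * (p.1 : G)} = ∑ g : G, centCard L g := by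
  classical
  have e : {p : L × G // (p.1 : G) * p.2 = p.2 * (p.1 : G)} ≃
      Σ g : G, {x : L // (x : G) * g = g * (x : G)} :=
    ((Equiv.prodComm L G).subtypeEquiv (fun p => Iff.rfl)).trans
      (Equiv.subtypeProdEquivSigmaSubtype fun (g : G) (x : L) => (x : G) * g = g * (x : G))
  rw [Nat.card_congr e, Nat.card_eq_fintype_card, Fintype.card_sigma]
  exact Finset.sum_congr rfl fun g _ => (Nat.card_eq_fintype_card).symm

lemma centCard_mul_le {G : Type*} [Group G] [Finite G] {H K : Subgroup G} (hHK : H ≤ K)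
    (g : G) : centCard K g * Nat.card H ≤ centCard H g * Nat.card K := by
  rw [centCard_eq, centCard_eq]
  set M := Subgroup.centralizer {g} with hM
  have h1 : Nat.card (M.subgroupOf H) * M.relIndex H = Nat.card H :=
    Subgroup.card_mul_index _
  have h2 : Nat.card (M.subgroupOf K) * M.relIndex K = Nat.card K :=
    Subgroup.card_mul_index _
  have hne : M.relIndex K ≠ 0 := Subgroup.index_ne_zero_of_finite
  have hr : M.relIndex H ≤ M.relIndex K := Subgroup.relIndex_le_of_le_right hHK hne
  calc Nat.card (M.subgroupOf K) * Nat.card H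
      = Nat.card (M.subgroupOf K) * (Nat.card (M.subgroupOf H) * M.relIndex H) := by rw [h1]
    _ = (Nat.card (M.subgroupOf H) * Nat.card (M.subgroupOf K)) * M.relIndex H := by ring
    _ ≤ (Nat.card (M.subgroupOf H) * Nat.card (M.subgroupOf K)) * M.relIndex K :=
        Nat.mul_le_mul_left _ hr
    _ = Nat.card (M.subgroupOf H) * Nat.card K := by rw [← h2]; ring

theorem relCommDeg_lt_of_nonabelian_abelian (G : Type*) [Group G] [Finite G]
    (hG : ¬ ∀ a b : G, a * b = b * a) (H K : Subgroup G) (hHK : H ≤ K)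
    (hK : ¬ ∀ a b : K, a * b = b * a) (hH : ∀ a b : H, a * b = b * a) :
    relCommDeg K < relCommDeg H := by
  classical
  have : Fintype G := Fintype.ofFinite G
  push_neg at hK
  obtain ⟨a, b, hab⟩ := hK
  obtain ⟨g₀, hHcomm, k, hk⟩ :
      ∃ g₀ : G, (∀ h : H, (h : G) * g₀ = g₀ * h) ∧ ∃ k : K, ¬ (k : G) * g₀ = g₀ * k := by
    by_cases hca : ∀ h : H, (h : G) * (a : G) = (a : G) * h
    · refine ⟨a, hca, b, fun e => hab ?_⟩
      exact Subtype.ext (by push_cast; exact e.symm)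
    · push_neg at hca
      obtain ⟨h, hna⟩ := hca
      refine ⟨(h : G), fun h' => ?_, a, fun e => hna e.symm⟩
      have := hH h' h
      exact_mod_cast congrArg (Subtype.val) this
  have hHpos : 0 < Nat.card H := Nat.card_pos
  have hKpos : 0 < Nat.card K := Nat.card_pos
  have hGpos : 0 < Nat.card G := Nat.card_pos
  have hHfull : centCard H g₀ = Nat.card H :=
    Nat.card_congr (Equiv.subtypeUnivEquiv hHcomm)
  have hKlt : centCard K g₀ < Nat.card K := by
    rw [centCard, Nat.card_eq_fintype_card, Nat.card_eq_fintype_card]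
    exact Fintype.card_subtype_lt (x := k) hk
  have hstrict : centCard K g₀ * Nat.card H < centCard H g₀ * Nat.card K := by
    rw [hHfull]
    calc centCard K g₀ * Nat.card H < Nat.card K * Nat.card H :=
          Nat.mul_lt_mul_of_lt_of_le hKlt (le_refl _) hHpos
      _ = Nat.card H * Nat.card K := Nat.mul_comm _ _
  have hsum : (∑ g : G, centCard K g) * Nat.card H
      < (∑ g : G, centCard H g) * Nat.card K := by
    rw [Finset.sum_mul, Finset.sum_mul]
    exact Finset.sum_lt_sum (fun g _ => centCard_mul_le hHK g)
      ⟨g₀, Finset.mem_univ g₀, hstrict⟩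
  unfold relCommDeg
  rw [sum_centCard, sum_centCard]
  rw [div_lt_div_iff₀ (by positivity) (by positivity)]
  have hq : ((∑ g : G, centCard K g) * Nat.card H : ℚ)
      < ((∑ g : G, centCard H g) * Nat.card K : ℚ) := by exact_mod_cast hsum
  have hGq : (0 : ℚ) < (Nat.card G : ℚ) := by exact_mod_cast hGpos
  nlinarith [hq, hGq]
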